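/- Let A be a positive n×n pairwise comparison matrix. The function f(v) = ∑_{i<j} (log a_{ij} − v_i + v_j)^2 on ℝ^n is minimized over the hyperplane {v : ∑_i v_i = 0} uniquely at v given by v_i = (1/n) ∑_j log a_{ij}. -/

import Mathlib

open Finset
lemma pair_half (n : ℕ) (g : Fin n → Fin n → ℝ)
    (hsym : ∀ i j, g j i = g i j) (hd : ∀ i, g i i = 0) :
    ∑ p ∈ Finset.univ.filter (fun p : Fin n × Fin n => p.1 < p.2), g p.1 p.2
      = (1/2) * ∑ i, ∑ j, g i j := by
  have hfull : ∑ i, ∑ j, g i j = ∑ p : Fin n × Fin n, g p.1 p.2 := by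
    rw [Fintype.sum_prod_type]
  have hsplit := Finset.sum_filter_add_sum_filter_not (Finset.univ : Finset (Fin n × Fin n))
    (fun p => p.1 < p.2) (fun p => g p.1 p.2)
  have hdiag : ∑ p ∈ Finset.univ.filter (fun p : Fin n × Fin n => ¬ p.1 < p.2 ∧ ¬ p.2 < p.1), g p.1 p.2 = 0 := by
    apply Finset.sum_eq_zero
    intro p hp
    simp only [Finset.mem_filter] at hp
    have : p.1 = p.2 := le_antisymm (not_lt.mp hp.2.2) (not_lt.mp hp.2.1)
    rw [this]; exact hd _
  have hswap : ∑ p ∈ Finset.univ.filter (fun p : Fin n × Fin n => p.2 < p.1), g p.1 p.2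
      = ∑ p ∈ Finset.univ.filter (fun p : Fin n × Fin n => p.1 < p.2), g p.1 p.2 := by
    apply Finset.sum_nbij' (fun p => (p.2, p.1)) (fun p => (p.2, p.1)) <;>
      simp [hsym]
  have hsplit2 := Finset.sum_filter_add_sum_filter_not
    (Finset.univ.filter (fun p : Fin n × Fin n => ¬ p.1 < p.2))
    (fun p => p.2 < p.1) (fun p => g p.1 p.2)
  rw [Finset.filter_filter, Finset.filter_filter] at hsplit2
  have he1 : Finset.univ.filter (fun p : Fin n × Fin n => ¬ p.1 < p.2 ∧ p.2 < p.1)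
      = Finset.univ.filter (fun p : Fin n × Fin n => p.2 < p.1) := by
    apply Finset.filter_congr; intro p _; simp; intro h; exact le_of_lt h
  rw [he1] at hsplit2
  rw [hdiag, add_zero] at hsplit2
  rw [hfull, ← hsplit, ← hsplit2, hswap]
  ring


theorem stmt_10 (n : ℕ) (hn : 0 < n) (A : Fin n → Fin n → ℝ)
    (hpos : ∀ i j, 0 < A i j)
    (hrec : ∀ i j, A j i = 1 / A i j)
    (f : (Fin n → ℝ) → ℝ)
    (hf : ∀ v, f v = ∑ p ∈ Finset.univ.filter (fun p : Fin n × Fin n => p.1 < p.2),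
      (Real.log (A p.1 p.2) - v p.1 + v p.2) ^ 2)
    (vstar : Fin n → ℝ)
    (hvstar : ∀ i, vstar i = (∑ j, Real.log (A i j)) / n) :
    (∑ i, vstar i = 0) ∧
    ∀ v : Fin n → ℝ, (∑ i, v i = 0) →
      f vstar ≤ f v ∧ (f v = f vstar → v = vstar) := by
  set L : Fin n → Fin n → ℝ := fun i j => Real.log (A i j) with hL
  have hanti : ∀ i j, L j i = - L i j := by
    intro i j
    simp only [hL]
    rw [hrec, one_div, Real.log_inv]
  have hnn : (0:ℝ) < n := by exact_mod_cast hn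
  have hsum0 : ∀ i, (∑ j, L i j) = n * vstar i := by
    intro i; rw [hvstar]; field_simp; rfl
  have hvs : ∑ i, vstar i = 0 := by
    have hT : ∑ i, ∑ j, L i j = 0 := by
      have h2 : ∑ i, ∑ j, L i j = - ∑ i, ∑ j, L i j := by
        calc ∑ i, ∑ j, L i j = ∑ j, ∑ i, L i j := Finset.sum_comm
          _ = ∑ j, ∑ i, -(L j i) := by
              refine Finset.sum_congr rfl fun j _ => Finset.sum_congr rfl fun i _ => ?_
              rw [hanti]
          _ = - ∑ i, ∑ j, L i j := by simp
      linarith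
    have h3 : ∑ i, vstar i = (∑ i, ∑ j, L i j) / n := by
      rw [Finset.sum_div]
      exact Finset.sum_congr rfl fun i _ => hvstar i
    rw [h3, hT, zero_div]
  refine ⟨hvs, ?_⟩
  intro v hv
  -- symmetrized objective
  have hfhalf : ∀ w : Fin n → ℝ,
      f w = (1/2) * ∑ i, ∑ j, (L i j - w i + w j)^2 := by
    intro w
    rw [hf w]
    exact pair_half n (fun i j => (L i j - w i + w j)^2)
      (fun i j => by
        show (L j i - w j + w i)^2 = (L i j - w i + w j)^2
        rw [hanti]; ring)
      (fun i => by
        show (L i i - w i + w i)^2 = 0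
        have : L i i = - L i i := hanti i i
        have h0 : L i i = 0 := by linarith
        rw [h0]; ring)
  set u : Fin n → ℝ := fun i => vstar i - v i with hu
  have husum : ∑ i, u i = 0 := by
    simp only [hu, Finset.sum_sub_distrib, hvs, hv, sub_zero]
  set r : Fin n → Fin n → ℝ := fun i j => L i j - vstar i + vstar j with hr
  have hconst : ∀ c : ℝ, ∑ _j : Fin n, c = n * c := by
    intro c; rw [Finset.sum_const, card_univ, Fintype.card_fin, nsmul_eq_mul]
  have hrow : ∀ i, ∑ j, r i j = 0 := by
    intro i
    simp only [hr]
    rw [Finset.sum_add_distrib, Finset.sum_sub_distrib, hsum0 i, hconst (vstar i), hvs]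
    ring
  have hcol : ∀ j, ∑ i, r i j = 0 := by
    intro j
    simp only [hr]
    rw [Finset.sum_add_distrib, Finset.sum_sub_distrib, hconst (vstar j)]
    have : ∑ i, L i j = - (n * vstar j) := by
      rw [← hsum0 j]
      rw [← Finset.sum_neg_distrib]
      exact Finset.sum_congr rfl fun i _ => by rw [hanti]
    rw [this, hvs]
    ring
  -- cross term vanishes
  have hcross : ∑ i, ∑ j, r i j * (u i - u j) = 0 := by
    have h1 : ∑ i, ∑ j, r i j * u i = 0 := by
      rw [show (0:ℝ) = ∑ i : Fin n, (0:ℝ) * u i by simp]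
      refine Finset.sum_congr rfl fun i _ => ?_
      rw [← Finset.sum_mul, hrow i]
    have h2 : ∑ i, ∑ j, r i j * u j = 0 := by
      rw [Finset.sum_comm]
      rw [show (0:ℝ) = ∑ j : Fin n, (0:ℝ) * u j by simp]
      refine Finset.sum_congr rfl fun j _ => ?_
      rw [← Finset.sum_mul, hcol j]
    calc ∑ i, ∑ j, r i j * (u i - u j)
        = ∑ i, ∑ j, (r i j * u i - r i j * u j) := by
          refine Finset.sum_congr rfl fun i _ => Finset.sum_congr rfl fun j _ => by ring
      _ = (∑ i, ∑ j, r i j * u i) - ∑ i, ∑ j, r i j * u j := by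
          rw [← Finset.sum_sub_distrib]
          refine Finset.sum_congr rfl fun i _ => by rw [Finset.sum_sub_distrib]
      _ = 0 := by rw [h1, h2]; ring
  set D : ℝ := ∑ i, ∑ j, (u i - u j)^2 with hD
  have hFdecomp : ∑ i, ∑ j, (L i j - v i + v j)^2
      = (∑ i, ∑ j, (L i j - vstar i + vstar j)^2) + D := by
    have hpt : ∀ i j, (L i j - v i + v j)^2
        = (r i j)^2 + 2 * (r i j * (u i - u j)) + (u i - u j)^2 := by
      intro i j
      simp only [hr, hu]
      ring
    calc ∑ i, ∑ j, (L i j - v i + v j)^2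
        = ∑ i, ∑ j, ((r i j)^2 + 2 * (r i j * (u i - u j)) + (u i - u j)^2) := by
          exact Finset.sum_congr rfl fun i _ => Finset.sum_congr rfl fun j _ => hpt i j
      _ = (∑ i, ∑ j, (r i j)^2) + 2 * (∑ i, ∑ j, r i j * (u i - u j)) + D := by
          rw [hD, Finset.mul_sum, ← Finset.sum_add_distrib, ← Finset.sum_add_distrib]
          refine Finset.sum_congr rfl fun i _ => ?_
          rw [Finset.mul_sum, ← Finset.sum_add_distrib, ← Finset.sum_add_distrib]
      _ = (∑ i, ∑ j, (L i j - vstar i + vstar j)^2) + D := by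
          rw [hcross]; simp [hr]
  have hDnonneg : 0 ≤ D := by
    apply Finset.sum_nonneg; intro i _
    apply Finset.sum_nonneg; intro j _
    positivity
  constructor
  · rw [hfhalf v, hfhalf vstar, hFdecomp]
    linarith
  · intro heq
    rw [hfhalf v, hfhalf vstar, hFdecomp] at heq
    have hD0 : D = 0 := by linarith
    have huij : ∀ i j, u i = u j := by
      intro i j
      have h1 : ∀ i ∈ (Finset.univ : Finset (Fin n)), (0:ℝ) ≤ ∑ j, (u i - u j)^2 :=
        fun i _ => Finset.sum_nonneg (fun j _ => sq_nonneg _)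
      have h2 := (Finset.sum_eq_zero_iff_of_nonneg h1).mp hD0 i (Finset.mem_univ i)
      have h3 := (Finset.sum_eq_zero_iff_of_nonneg
        (fun j _ => sq_nonneg (u i - u j))).mp h2 j (Finset.mem_univ j)
      have h4 := sq_eq_zero_iff.mp h3
      linarith
    have hu0 : ∀ i, u i = 0 := by
      intro i
      have : (n : ℝ) * u i = ∑ j, u j := by
        rw [← hconst (u i)]
        exact Finset.sum_congr rfl fun j _ => huij i j
      rw [husum] at this
      have := mul_eq_zero.mp this
      rcases this with h | h
      · exact absurd h (ne_of_gt hnn)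
      · exact h
    funext i
    have := hu0 i
    simp only [hu] at this
    linarith
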